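/- Let n < p, let X ∈ ℝ^{n×p} be a fixed matrix with XXᵀ invertible and smallest singular value σ_min(X) ≥ (γ√n/2)(√(p/n) − 1) for some γ > 0, and let ε ∈ ℝⁿ be a random vector with i.i.d. N(0,σ²) entries, σ > 0. Then P(‖Xᵀ(XXᵀ)⁻¹ε‖₂ > 2√2 σ/(γ(√(p/n) − 1))) ≤ 1.14^{−n}. -/

import Mathlib

open MeasureTheory ProbabilityTheory Matrix

/-- The smallest singular value of an `n × p` matrix (`n ≤ p`):
the infimum of `‖Mᵀ u‖₂` over unit vectors `u ∈ ℝⁿ`. -/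
noncomputable def sMin {n p : ℕ} (M : Matrix (Fin n) (Fin p) ℝ) : ℝ :=
  sInf {r : ℝ | ∃ u : Fin n → ℝ, (∑ i, u i ^ 2) = 1 ∧
    r = Real.sqrt (∑ j, (Mᵀ.mulVec u j) ^ 2)}

section Aux

open Real

/-! ### One-dimensional Gaussian computations -/

lemma gauss_smul_eq (σ : ℝ) (hσ : 0 < σ) (x : ℝ) :
    gaussianPDFReal 0 ⟨σ^2, sq_nonneg σ⟩ x * Real.exp (x^2/(4*σ^2))
      = (Real.sqrt (2*π*σ^2))⁻¹ * Real.exp (-(4*σ^2)⁻¹ * x^2) := by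
  rw [gaussianPDFReal_def 0 ⟨σ^2, sq_nonneg σ⟩]
  change (√(2 * π * σ^2))⁻¹ * rexp (-(x - 0) ^ 2 / (2 * σ^2)) * Real.exp (x^2/(4*σ^2)) = _
  simp only [NNReal.coe_mk, sub_zero]
  rw [mul_assoc, ← Real.exp_add]
  congr 2
  field_simp
  ring

lemma gauss_integrable (σ : ℝ) (hσ : 0 < σ) :
    Integrable (fun x => Real.exp (x ^ 2 / (4 * σ ^ 2)))
      (gaussianReal 0 ⟨σ ^ 2, sq_nonneg σ⟩) := by
  have hv : (⟨σ ^ 2, sq_nonneg σ⟩ : NNReal) ≠ 0 := by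
    simp [← NNReal.coe_ne_zero, (pow_pos hσ 2).ne']
  rw [gaussianReal_of_var_ne_zero _ hv]
  have hpdf : (gaussianPDF 0 ⟨σ ^ 2, sq_nonneg σ⟩)
      = fun x => ((gaussianPDFReal 0 ⟨σ ^ 2, sq_nonneg σ⟩ x).toNNReal : ENNReal) := rfl
  rw [hpdf, integrable_withDensity_iff_integrable_smul₀]
  · have : (fun x => (gaussianPDFReal 0 ⟨σ ^ 2, sq_nonneg σ⟩ x).toNNReal
        • Real.exp (x ^ 2 / (4 * σ ^ 2)))
        = fun x => (Real.sqrt (2*π*σ^2))⁻¹ * Real.exp (-(4*σ^2)⁻¹ * x^2) := by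
      ext x
      rw [NNReal.smul_def, smul_eq_mul, Real.coe_toNNReal _ (gaussianPDFReal_nonneg 0 ⟨σ ^ 2, sq_nonneg σ⟩ x),
        gauss_smul_eq σ hσ]
    rw [this]
    exact (integrable_exp_neg_mul_sq (by positivity)).const_mul _
  · exact (measurable_gaussianPDFReal _ _).real_toNNReal.aemeasurable

lemma gauss_integral (σ : ℝ) (hσ : 0 < σ) :
    ∫ x, Real.exp (x ^ 2 / (4 * σ ^ 2)) ∂(gaussianReal 0 ⟨σ ^ 2, sq_nonneg σ⟩)
      = Real.sqrt 2 := by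
  have hv : (⟨σ ^ 2, sq_nonneg σ⟩ : NNReal) ≠ 0 := by
    simp [← NNReal.coe_ne_zero, (pow_pos hσ 2).ne']
  rw [gaussianReal_of_var_ne_zero _ hv]
  have hpdf : (gaussianPDF 0 ⟨σ ^ 2, sq_nonneg σ⟩)
      = fun x => ((gaussianPDFReal 0 ⟨σ ^ 2, sq_nonneg σ⟩ x).toNNReal : ENNReal) := rfl
  rw [hpdf, integral_withDensity_eq_integral_smul₀
    ((measurable_gaussianPDFReal 0 ⟨σ ^ 2, sq_nonneg σ⟩).real_toNNReal.aemeasurable)]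
  have : (fun x => (gaussianPDFReal 0 ⟨σ ^ 2, sq_nonneg σ⟩ x).toNNReal
      • Real.exp (x ^ 2 / (4 * σ ^ 2)))
      = fun x => (Real.sqrt (2*π*σ^2))⁻¹ * Real.exp (-(4*σ^2)⁻¹ * x^2) := by
    ext x
    rw [NNReal.smul_def, smul_eq_mul, Real.coe_toNNReal _ (gaussianPDFReal_nonneg 0 ⟨σ ^ 2, sq_nonneg σ⟩ x),
      gauss_smul_eq σ hσ]
  rw [this, integral_const_mul, integral_gaussian]
  have h1 : π / (4*σ^2)⁻¹ = 2 * (2*π*σ^2) := by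
    field_simp; ring
  rw [h1, Real.sqrt_mul (by norm_num) (2*π*σ^2)]
  have h2 : Real.sqrt (2*π*σ^2) ≠ 0 := by
    refine (Real.sqrt_pos.mpr ?_).ne'
    positivity
  field_simp

/-! ### Linear algebra: the smallest singular value bound -/

lemma sMin_le {n p : ℕ} (M : Matrix (Fin n) (Fin p) ℝ) (u : Fin n → ℝ)
    (hu : (∑ i, u i ^ 2) = 1) :
    sMin M ≤ Real.sqrt (∑ j, (Mᵀ.mulVec u j) ^ 2) := by
  refine csInf_le ⟨0, ?_⟩ ⟨u, hu, rfl⟩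
  rintro r ⟨v, -, rfl⟩
  exact Real.sqrt_nonneg _

lemma smin_bound {n p : ℕ} (X : Matrix (Fin n) (Fin p) ℝ)
    (hinv : IsUnit (X * Xᵀ)) (hs : 0 ≤ sMin X) (e : Fin n → ℝ) :
    (sMin X)^2 * (∑ j, ((Xᵀ * (X * Xᵀ)⁻¹).mulVec e j) ^ 2) ≤ ∑ i, e i ^ 2 := by
  have hdet : IsUnit (X * Xᵀ).det := (Matrix.isUnit_iff_isUnit_det _).mp hinv
  set A := X * Xᵀ with hA
  set w : Fin n → ℝ := A⁻¹.mulVec e with hw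
  have hBe : (Xᵀ * A⁻¹).mulVec e = Xᵀ.mulVec w := (Matrix.mulVec_mulVec e Xᵀ A⁻¹).symm
  set y : Fin p → ℝ := Xᵀ.mulVec w with hy
  set T : ℝ := ∑ j, y j ^ 2 with hTdef
  set W : ℝ := ∑ i, w i ^ 2 with hWdef
  set S : ℝ := ∑ i, e i ^ 2 with hSdef
  have hT_nonneg : 0 ≤ T := Finset.sum_nonneg fun j _ => sq_nonneg _
  have hW_nonneg : 0 ≤ W := Finset.sum_nonneg fun i _ => sq_nonneg _
  have hS_nonneg : 0 ≤ S := Finset.sum_nonneg fun i _ => sq_nonneg _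
  have hXy : X.mulVec y = e := by
    rw [hy, hw, Matrix.mulVec_mulVec, Matrix.mulVec_mulVec, ← hA,
      Matrix.mul_nonsing_inv _ hdet, Matrix.one_mulVec]
  have hT : T = w ⬝ᵥ e := by
    have h1 : w ⬝ᵥ X.mulVec y = (w ᵥ* X) ⬝ᵥ y := Matrix.dotProduct_mulVec w X y
    have h2 : w ᵥ* X = y := by rw [hy, Matrix.mulVec_transpose]
    rw [← hXy, h1, h2]
    simp [dotProduct, hTdef, sq]
  have hCS : T ^ 2 ≤ W * S := by
    rw [hT]
    have h := Finset.sum_mul_sq_le_sq_mul_sq Finset.univ w e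
    rw [hWdef, hSdef]
    simpa [dotProduct] using h
  have hsW : (sMin X)^2 * W ≤ T := by
    rcases eq_or_lt_of_le hW_nonneg with hW0 | hW0
    · rw [← hW0]
      simpa using hT_nonneg
    · set u : Fin n → ℝ := (Real.sqrt W)⁻¹ • w with hu
      have hsqW : Real.sqrt W > 0 := Real.sqrt_pos.mpr hW0
      have hu1 : ∑ i, u i ^ 2 = 1 := by
        simp only [hu, Pi.smul_apply, smul_eq_mul, mul_pow, ← Finset.mul_sum]
        rw [← hWdef, ← Real.sqrt_inv, Real.sq_sqrt (inv_nonneg.mpr hW_nonneg)]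
        exact inv_mul_cancel₀ hW0.ne'
      have hXu : ∑ j, (Xᵀ.mulVec u j) ^ 2 = W⁻¹ * T := by
        rw [hu, Matrix.mulVec_smul]
        simp only [Pi.smul_apply, smul_eq_mul, mul_pow, ← Finset.mul_sum]
        rw [← hy, ← hTdef, ← Real.sqrt_inv, Real.sq_sqrt (inv_nonneg.mpr hW_nonneg)]
      have hle := sMin_le X u hu1
      rw [hXu] at hle
      have h2 : (sMin X)^2 ≤ W⁻¹ * T :=
        (Real.le_sqrt hs (by positivity)).mp hle
      calc (sMin X)^2 * W ≤ (W⁻¹ * T) * W := by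
            exact mul_le_mul_of_nonneg_right h2 hW_nonneg
        _ = T := by field_simp
  rw [hBe, ← hTdef]
  rcases eq_or_lt_of_le hT_nonneg with hT0 | hT0
  · rw [← hT0]; simpa using hS_nonneg
  · have key : ((sMin X)^2 * T) * T ≤ S * T := by
      calc ((sMin X)^2 * T) * T = (sMin X)^2 * T^2 := by ring
        _ ≤ (sMin X)^2 * (W * S) := by
            exact mul_le_mul_of_nonneg_left hCS (sq_nonneg _)
        _ = ((sMin X)^2 * W) * S := by ring
        _ ≤ T * S := mul_le_mul_of_nonneg_right hsW hS_nonneg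
        _ = S * T := by ring
    exact le_of_mul_le_mul_right key hT0

/-! ### The Chernoff bound for the chi-square tail -/

lemma chernoff (n : ℕ) (σ : ℝ) (hσ : 0 < σ) :
    (Measure.pi fun _ : Fin n => gaussianReal 0 ⟨σ ^ 2, sq_nonneg σ⟩)
      {e : Fin n → ℝ | 2 * n * σ ^ 2 < ∑ i, e i ^ 2}
      ≤ ENNReal.ofReal ((Real.sqrt 2 / Real.exp (1/2)) ^ n) := by
  letI : MeasureSpace ℝ := ⟨gaussianReal 0 ⟨σ ^ 2, sq_nonneg σ⟩⟩
  haveI : IsProbabilityMeasure (volume : Measure ℝ) :=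
    instIsProbabilityMeasureGaussianReal 0 _
  haveI : SigmaFinite (volume : Measure ℝ) := inferInstance
  show (volume : Measure (Fin n → ℝ)) {e : Fin n → ℝ | 2 * n * σ ^ 2 < ∑ i, e i ^ 2}
      ≤ ENNReal.ofReal ((Real.sqrt 2 / Real.exp (1/2)) ^ n)
  haveI : IsProbabilityMeasure (volume : Measure (Fin n → ℝ)) := by
    constructor
    rw [MeasureTheory.volume_pi]
    simp [Measure.pi_univ]
  set f : (Fin n → ℝ) → ℝ := fun e => ∏ i, Real.exp ((e i) ^ 2 / (4 * σ ^ 2)) with hf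
  have hf_int : Integrable f := Integrable.fintype_prod (fun i => gauss_integrable σ hσ)
  have hf_nonneg : ∀ e, 0 ≤ f e := fun e => Finset.prod_nonneg fun i _ => (Real.exp_pos _).le
  have hint : ∫ e, f e = (Real.sqrt 2) ^ n := by
    rw [hf, integral_fintype_prod_volume_eq_pow (ι := Fin n) (fun x : ℝ => Real.exp (x ^ 2 / (4 * σ ^ 2)))]
    rw [show (volume : Measure ℝ) = gaussianReal 0 ⟨σ ^ 2, sq_nonneg σ⟩ from rfl,
      gauss_integral σ hσ, Fintype.card_fin]
  set ε : ℝ := Real.exp ((n : ℝ) / 2) with hε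
  have hε_pos : 0 < ε := Real.exp_pos _
  have hsub : {e : Fin n → ℝ | 2 * n * σ ^ 2 < ∑ i, e i ^ 2} ⊆ {e | ε ≤ f e} := by
    intro e he
    have hfe : f e = Real.exp (∑ i, (e i) ^ 2 / (4 * σ ^ 2)) := (Real.exp_sum _ _).symm
    rw [Set.mem_setOf_eq, hfe, hε, Real.exp_le_exp, ← Finset.sum_div,
      le_div_iff₀ (by positivity)]
    have h2 : (2:ℝ) * n * σ ^ 2 < ∑ i, e i ^ 2 := he
    calc (n : ℝ) / 2 * (4 * σ ^ 2) = 2 * n * σ ^ 2 := by ring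
      _ ≤ ∑ i, e i ^ 2 := le_of_lt h2
  have markov := mul_meas_ge_le_integral_of_nonneg (μ := (volume : Measure (Fin n → ℝ)))
    (ae_of_all _ hf_nonneg) hf_int ε
  have hmono : (volume : Measure (Fin n → ℝ)) _ ≤ volume _ := measure_mono hsub
  have h1 : (volume {e : Fin n → ℝ | 2 * n * σ ^ 2 < ∑ i, e i ^ 2}).toReal
      ≤ (Real.sqrt 2 / Real.exp (1/2)) ^ n := by
    have h2 : (volume {e : Fin n → ℝ | ε ≤ f e}).toReal ≤ (Real.sqrt 2) ^ n / ε := by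
      rw [le_div_iff₀ hε_pos, mul_comm]
      rw [hint] at markov
      exact markov
    have h3 : (volume {e : Fin n → ℝ | 2 * n * σ ^ 2 < ∑ i, e i ^ 2}).toReal
        ≤ (volume {e : Fin n → ℝ | ε ≤ f e}).toReal :=
      ENNReal.toReal_mono (measure_ne_top _ _) hmono
    refine h3.trans (h2.trans (le_of_eq ?_))
    rw [hε, div_pow, show (n : ℝ) / 2 = n * (1/2) by ring, Real.exp_nat_mul]
  calc volume {e : Fin n → ℝ | 2 * n * σ ^ 2 < ∑ i, e i ^ 2}
      = ENNReal.ofReal ((volume {e : Fin n → ℝ | 2 * n * σ ^ 2 < ∑ i, e i ^ 2}).toReal) :=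
        (ENNReal.ofReal_toReal (measure_ne_top _ _)).symm
    _ ≤ ENNReal.ofReal ((Real.sqrt 2 / Real.exp (1/2)) ^ n) := ENNReal.ofReal_le_ofReal h1

/-! ### Numerics -/

lemma numeric (n : ℕ) : ENNReal.ofReal ((Real.sqrt 2 / Real.exp (1/2)) ^ n)
    ≤ ENNReal.ofReal ((1.14 : ℝ) ^ (-(n : ℤ))) := by
  apply ENNReal.ofReal_le_ofReal
  have hexp : Real.exp (1/2) = Real.sqrt (Real.exp 1) := by
    rw [← Real.exp_half]
  have he : (2.5992 : ℝ) < Real.exp 1 := lt_trans (by norm_num) Real.exp_one_gt_d9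
  have hkey : Real.sqrt 2 * 1.14 ≤ Real.exp (1/2) := by
    rw [hexp]
    rw [show Real.sqrt 2 * 1.14 = Real.sqrt 2 * Real.sqrt (1.2996 : ℝ) from ?_]
    · rw [← Real.sqrt_mul (by norm_num)]
      exact Real.sqrt_le_sqrt (by norm_num; linarith [he])
    · rw [show (1.2996 : ℝ) = 1.14 ^ 2 by norm_num, Real.sqrt_sq (by norm_num)]
  have hbase : Real.sqrt 2 / Real.exp (1/2) ≤ (1.14 : ℝ)⁻¹ := by
    rw [div_le_iff₀ (Real.exp_pos _)]
    rw [show (1.14 : ℝ)⁻¹ * Real.exp (1/2) = Real.exp (1/2) / 1.14 by ring,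
      le_div_iff₀ (by norm_num)]
    exact hkey
  rw [_root_.zpow_neg, zpow_natCast, ← inv_pow]
  exact pow_le_pow_left₀ (by positivity) hbase n

end Aux

theorem stmt15 (n p : ℕ) (hnp : n < p) (X : Matrix (Fin n) (Fin p) ℝ)
    (hinv : IsUnit (X * Xᵀ)) (γ σ : ℝ) (hγ : 0 < γ) (hσ : 0 < σ)
    (hsmin : γ * Real.sqrt n / 2 * (Real.sqrt ((p : ℝ) / n) - 1) ≤ sMin X) :
    (Measure.pi fun _ : Fin n => gaussianReal 0 ⟨σ ^ 2, sq_nonneg σ⟩)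
      {e : Fin n → ℝ |
        2 * Real.sqrt 2 * σ / (γ * (Real.sqrt ((p : ℝ) / n) - 1)) <
          Real.sqrt (∑ j, ((Xᵀ * (X * Xᵀ)⁻¹).mulVec e j) ^ 2)}
      ≤ ENNReal.ofReal ((1.14 : ℝ) ^ (-(n : ℤ))) := by
  by_cases hn : n = 0
  · subst hn
    haveI : IsProbabilityMeasure
        (Measure.pi fun _ : Fin 0 => gaussianReal 0 ⟨σ ^ 2, sq_nonneg σ⟩) := by
      constructor
      simp [Measure.pi_univ]
    refine le_trans prob_le_one (le_of_eq ?_)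
    norm_num
  · have hn1 : (1:ℝ) ≤ n := by exact_mod_cast Nat.one_le_iff_ne_zero.mpr hn
    have hn0 : (0:ℝ) < n := by linarith
    set r : ℝ := Real.sqrt ((p : ℝ) / n) with hrdef
    have hpn : (1:ℝ) < (p : ℝ) / n := by
      rw [lt_div_iff₀ hn0, one_mul]
      exact_mod_cast hnp
    have hr : 1 < r := by
      rw [hrdef]
      refine (Real.lt_sqrt zero_le_one).mpr ?_
      rwa [one_pow]
    have hr1 : (0:ℝ) < r - 1 := sub_pos.mpr hr
    have hs0 : 0 < γ * Real.sqrt n / 2 * (r - 1) := by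
      have h1 : 0 < γ * Real.sqrt n / 2 := by positivity
      exact mul_pos h1 hr1
    have hs : 0 < sMin X := lt_of_lt_of_le hs0 hsmin
    refine le_trans (measure_mono ?_) (le_trans (chernoff n σ hσ) (numeric n))
    intro e he
    simp only [Set.mem_setOf_eq] at he ⊢
    set T' : ℝ := ∑ j, ((Xᵀ * (X * Xᵀ)⁻¹).mulVec e j) ^ 2 with hT'def
    set L : ℝ := 2 * Real.sqrt 2 * σ / (γ * (r - 1)) with hLdef
    have hL_pos : 0 < L := by
      refine div_pos (by positivity) (mul_pos hγ hr1)
    have hLT : L ^ 2 < T' := (Real.lt_sqrt hL_pos.le).mp he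
    have hb := smin_bound X hinv hs.le e
    rw [← hT'def] at hb
    have hs₀L : (γ * Real.sqrt n / 2 * (r - 1)) ^ 2 * L ^ 2 = 2 * n * σ ^ 2 := by
      have h1 : (Real.sqrt n) ^ 2 = n := Real.sq_sqrt (Nat.cast_nonneg n)
      have h2 : (Real.sqrt 2) ^ 2 = 2 := Real.sq_sqrt (by norm_num)
      have hγ' : γ ≠ 0 := hγ.ne'
      have hr' : r - 1 ≠ 0 := hr1.ne'
      rw [hLdef]
      field_simp
      ring_nf
      rw [h1, h2]
    calc 2 * (n:ℝ) * σ ^ 2 = (γ * Real.sqrt n / 2 * (r - 1)) ^ 2 * L ^ 2 := hs₀L.symm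
      _ ≤ (sMin X) ^ 2 * L ^ 2 :=
          mul_le_mul_of_nonneg_right (pow_le_pow_left₀ hs0.le hsmin 2) (sq_nonneg L)
      _ < (sMin X) ^ 2 * T' := by
          exact mul_lt_mul_of_pos_left hLT (pow_pos hs 2)
      _ ≤ ∑ i, e i ^ 2 := hb
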